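/- arXiv:1803.05413 — 2 statements merged into one kernel-verified Lean document; each statement's English description precedes it below -/
import Mathlib

section
/- Let V : ℝ³ → ℝ be measurable and let C > 0 be such that for every differentiable function φ : ℝ³ → ℂ with φ and ∇φ square-integrable, ∫_{ℝ³} |V(x)|² |φ(x)|² dx ≤ C (∫ |φ|² + ∫ |∇φ|²). Then for every ε > 0 and every differentiable ψ : ℝ³ × ℝ³ → ℂ with ψ and its full gradient square-integrable on ℝ⁶, |∬_{ℝ³×ℝ³} V(x−y) |ψ(x,y)|² dx dy| ≤ ε ∬ |∇ₓψ(x,y)|² dx dy + (ε + C/(4ε)) ∬ |ψ(x,y)|² dx dy, where ∇ₓ denotes the gradient in the first variable. -/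
open MeasureTheory
open scoped ENNReal

noncomputable section

local notation "𝓔" => EuclideanSpace ℝ (Fin 3)

set_option maxHeartbeats 1000000 in
/-- If `V` satisfies the quadratic-form bound `V² ≤ C(1−Δ)`, i.e.
`∫ |V|²|φ|² ≤ C(∫|φ|² + ∫|∇φ|²)` for all differentiable `φ : ℝ³ → ℂ` with `φ, ∇φ ∈ L²`,
then for every `ε > 0` the relative form bound
`|∬ V(x−y)|ψ(x,y)|²| ≤ ε ∬ |∇ₓψ|² + (ε + C/(4ε)) ∬ |ψ|²` holds for every differentiable
`ψ : ℝ³ × ℝ³ → ℂ` with `ψ` and its full gradient square-integrable on `ℝ⁶`. -/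
theorem two_body_form_bound
    (V : EuclideanSpace ℝ (Fin 3) → ℝ) (hVm : Measurable V) (C : ℝ) (hC : 0 < C)
    (hV : ∀ φ : EuclideanSpace ℝ (Fin 3) → ℂ, Differentiable ℝ φ →
      MemLp φ 2 volume → MemLp (fun x => fderiv ℝ φ x) 2 volume →
      ∫⁻ x, (‖V x‖₊ : ℝ≥0∞) ^ 2 * (‖φ x‖₊ : ℝ≥0∞) ^ 2
        ≤ ENNReal.ofReal (C * ((∫ x, ‖φ x‖ ^ 2) + ∫ x, ‖fderiv ℝ φ x‖ ^ 2)))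
    (ε : ℝ) (hε : 0 < ε)
    (ψ : EuclideanSpace ℝ (Fin 3) × EuclideanSpace ℝ (Fin 3) → ℂ)
    (hψdiff : Differentiable ℝ ψ)
    (hψ : MemLp ψ 2 volume) (hψ' : MemLp (fun p => fderiv ℝ ψ p) 2 volume) :
    |∫ p : EuclideanSpace ℝ (Fin 3) × EuclideanSpace ℝ (Fin 3),
        V (p.1 - p.2) * ‖ψ p‖ ^ 2|
      ≤ ε * (∫ p : EuclideanSpace ℝ (Fin 3) × EuclideanSpace ℝ (Fin 3),
            ‖fderiv ℝ (fun x => ψ (x, p.2)) p.1‖ ^ 2)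
        + (ε + C / (4 * ε))
          * ∫ p : EuclideanSpace ℝ (Fin 3) × EuclideanSpace ℝ (Fin 3), ‖ψ p‖ ^ 2 := by
  classical
  -- the partial derivative in the first variable
  set D : 𝓔 × 𝓔 → (𝓔 →L[ℝ] ℂ) := fun p =>
    (fderiv ℝ ψ p).comp (ContinuousLinearMap.inl ℝ 𝓔 𝓔) with hDdef
  have hψc : Continuous ψ := hψdiff.continuous
  have hDmeas : Measurable D := by
    have h1 : Measurable (fderiv ℝ ψ) := measurable_fderiv ℝ ψ
    have h2 : Continuous fun L : (𝓔 × 𝓔 →L[ℝ] ℂ) =>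
        L.comp (ContinuousLinearMap.inl ℝ 𝓔 𝓔) :=
      (((ContinuousLinearMap.compL ℝ 𝓔 (𝓔 × 𝓔) ℂ).flip
        (ContinuousLinearMap.inl ℝ 𝓔 𝓔))).continuous
    exact h2.measurable.comp h1
  have hfd : ∀ a b : 𝓔, fderiv ℝ (fun x => ψ (x, b)) a = D (a, b) := by
    intro a b
    have h1 : HasFDerivAt (fun x : 𝓔 => (x, b)) (ContinuousLinearMap.inl ℝ 𝓔 𝓔) a :=
      hasFDerivAt_prodMk_left a b
    exact ((hψdiff (a, b)).hasFDerivAt.comp a h1).fderiv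
  have hfd' : ∀ y a : 𝓔, fderiv ℝ (fun x => ψ (x + y, y)) a = D (a + y, y) := by
    intro y a
    have h0 : HasFDerivAt (fun x : 𝓔 => x + y) (ContinuousLinearMap.id ℝ 𝓔) a :=
      (hasFDerivAt_id a).add_const y
    have h1 : HasFDerivAt (fun x : 𝓔 => (x + y, y)) (ContinuousLinearMap.inl ℝ 𝓔 𝓔) a := by
      have := (hasFDerivAt_prodMk_left (a + y) y).comp a h0
      exact this
    exact ((hψdiff (a + y, y)).hasFDerivAt.comp a h1).fderiv
  have hDle : ∀ p, ‖D p‖ ≤ ‖fderiv ℝ ψ p‖ := by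
    intro p
    refine ContinuousLinearMap.opNorm_le_bound _ (norm_nonneg _) fun x => ?_
    have hx : ‖(ContinuousLinearMap.inl ℝ 𝓔 𝓔) x‖ = ‖x‖ := by
      simp [Prod.norm_def]
    calc ‖(fderiv ℝ ψ p) ((ContinuousLinearMap.inl ℝ 𝓔 𝓔) x)‖
        ≤ ‖fderiv ℝ ψ p‖ * ‖(ContinuousLinearMap.inl ℝ 𝓔 𝓔) x‖ :=
          (fderiv ℝ ψ p).le_opNorm _
      _ = ‖fderiv ℝ ψ p‖ * ‖x‖ := by rw [hx]
  have hDmem : MemLp D 2 (volume : Measure (𝓔 × 𝓔)) :=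
    hψ'.of_le hDmeas.aestronglyMeasurable (Filter.Eventually.of_forall hDle)
  have hψsq : Integrable (fun p : 𝓔 × 𝓔 => ‖ψ p‖ ^ 2) volume :=
    (memLp_two_iff_integrable_sq_norm hψ.aestronglyMeasurable).mp hψ
  have hDsq : Integrable (fun p : 𝓔 × 𝓔 => ‖D p‖ ^ 2) volume :=
    (memLp_two_iff_integrable_sq_norm hDmem.aestronglyMeasurable).mp hDmem
  have hvol : (volume : Measure (𝓔 × 𝓔)) = (volume : Measure 𝓔).prod volume :=
    rfl
  have hψsq' : Integrable (fun p : 𝓔 × 𝓔 => ‖ψ p‖ ^ 2)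
      ((volume : Measure 𝓔).prod volume) := hvol ▸ hψsq
  have hDsq' : Integrable (fun p : 𝓔 × 𝓔 => ‖D p‖ ^ 2)
      ((volume : Measure 𝓔).prod volume) := hvol ▸ hDsq
  set A : 𝓔 → ℝ := fun y => ∫ x, ‖ψ (x, y)‖ ^ 2 with hAdef
  set B : 𝓔 → ℝ := fun y => ∫ x, ‖D (x, y)‖ ^ 2 with hBdef
  have hAint : Integrable A volume := hψsq'.integral_prod_right
  have hBint : Integrable B volume := hDsq'.integral_prod_right
  set S : ℝ := ∫ p : 𝓔 × 𝓔, ‖ψ p‖ ^ 2 with hSdef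
  set T : ℝ := ∫ p : 𝓔 × 𝓔, ‖D p‖ ^ 2 with hTdef
  have hS0 : 0 ≤ S := integral_nonneg fun p => by positivity
  have hT0 : 0 ≤ T := integral_nonneg fun p => by positivity
  have hSA : ∫ y, A y = S := by
    rw [hSdef, hvol, integral_prod_symm _ hψsq']
  have hTB : ∫ y, B y = T := by
    rw [hTdef, hvol, integral_prod_symm _ hDsq']
  have hA0 : ∀ y, 0 ≤ A y := fun y => integral_nonneg fun x => by positivity
  have hB0 : ∀ y, 0 ≤ B y := fun y => integral_nonneg fun x => by positivity
  have hVsub : Measurable fun p : 𝓔 × 𝓔 => V (p.1 - p.2) :=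
    hVm.comp (measurable_fst.sub measurable_snd)
  have hmf₁ : Measurable fun p : 𝓔 × 𝓔 =>
      (‖V (p.1 - p.2)‖₊ : ℝ≥0∞) ^ 2 * (‖ψ p‖₊ : ℝ≥0∞) ^ 2 :=
    ((hVsub.nnnorm.coe_nnreal_ennreal.pow_const 2).mul
      (hψc.measurable.nnnorm.coe_nnreal_ennreal.pow_const 2))
  have hmg : Measurable fun p : 𝓔 × 𝓔 => (‖ψ p‖₊ : ℝ≥0∞) ^ 2 :=
    hψc.measurable.nnnorm.coe_nnreal_ennreal.pow_const 2
  -- pointwise bound |V| ≤ (ε/C) V² + C/(4ε)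
  have hptwise : ∀ z : 𝓔, (‖V z‖₊ : ℝ≥0∞)
      ≤ ENNReal.ofReal (ε / C) * (‖V z‖₊ : ℝ≥0∞) ^ 2 + ENNReal.ofReal (C / (4 * ε)) := by
    intro z
    have hreal : ‖V z‖ ≤ (ε / C) * ‖V z‖ ^ 2 + C / (4 * ε) := by
      set v : ℝ := ‖V z‖ with hv
      have h1 : 0 ≤ (ε / C) * (v - C / (2 * ε)) ^ 2 := by positivity
      have h2 : (ε / C) * (v - C / (2 * ε)) ^ 2
          = (ε / C) * v ^ 2 - v + C / (4 * ε) := by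
        field_simp
        ring
      rw [h2] at h1
      linarith
    calc (‖V z‖₊ : ℝ≥0∞) = ENNReal.ofReal ‖V z‖ := (ofReal_norm _).symm
      _ ≤ ENNReal.ofReal ((ε / C) * ‖V z‖ ^ 2 + C / (4 * ε)) :=
          ENNReal.ofReal_le_ofReal hreal
      _ = ENNReal.ofReal (ε / C) * (‖V z‖₊ : ℝ≥0∞) ^ 2 + ENNReal.ofReal (C / (4 * ε)) := by
          rw [ENNReal.ofReal_add (by positivity) (by positivity),
            ENNReal.ofReal_mul (by positivity), ENNReal.ofReal_pow (norm_nonneg _),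
            ofReal_norm, enorm_eq_nnnorm]
  have hstepB : (∫⁻ p : 𝓔 × 𝓔, (‖V (p.1 - p.2)‖₊ : ℝ≥0∞) * (‖ψ p‖₊ : ℝ≥0∞) ^ 2)
      ≤ ENNReal.ofReal (ε / C)
          * (∫⁻ p : 𝓔 × 𝓔, (‖V (p.1 - p.2)‖₊ : ℝ≥0∞) ^ 2 * (‖ψ p‖₊ : ℝ≥0∞) ^ 2)
        + ENNReal.ofReal (C / (4 * ε)) * ∫⁻ p : 𝓔 × 𝓔, (‖ψ p‖₊ : ℝ≥0∞) ^ 2 := by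
    have hmono : (∫⁻ p : 𝓔 × 𝓔, (‖V (p.1 - p.2)‖₊ : ℝ≥0∞) * (‖ψ p‖₊ : ℝ≥0∞) ^ 2)
        ≤ ∫⁻ p : 𝓔 × 𝓔,
            (ENNReal.ofReal (ε / C)
                * ((‖V (p.1 - p.2)‖₊ : ℝ≥0∞) ^ 2 * (‖ψ p‖₊ : ℝ≥0∞) ^ 2)
              + ENNReal.ofReal (C / (4 * ε)) * (‖ψ p‖₊ : ℝ≥0∞) ^ 2) := by
      refine lintegral_mono fun p => ?_
      calc (‖V (p.1 - p.2)‖₊ : ℝ≥0∞) * (‖ψ p‖₊ : ℝ≥0∞) ^ 2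
          ≤ (ENNReal.ofReal (ε / C) * (‖V (p.1 - p.2)‖₊ : ℝ≥0∞) ^ 2
              + ENNReal.ofReal (C / (4 * ε))) * (‖ψ p‖₊ : ℝ≥0∞) ^ 2 :=
            mul_le_mul_left (hptwise _) _
        _ = _ := by ring
    refine hmono.trans (le_of_eq ?_)
    rw [lintegral_add_left (hmf₁.const_mul _), lintegral_const_mul _ hmf₁,
      lintegral_const_mul _ hmg]
  -- Step C : bound the middle lintegral using the hypothesis hV and Fubini
  have hstepC : (∫⁻ p : 𝓔 × 𝓔, (‖V (p.1 - p.2)‖₊ : ℝ≥0∞) ^ 2 * (‖ψ p‖₊ : ℝ≥0∞) ^ 2)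
      ≤ ENNReal.ofReal (C * (S + T)) := by
    have htonelli : (∫⁻ p : 𝓔 × 𝓔, (‖V (p.1 - p.2)‖₊ : ℝ≥0∞) ^ 2 * (‖ψ p‖₊ : ℝ≥0∞) ^ 2)
        = ∫⁻ y, ∫⁻ x, (‖V (x - y)‖₊ : ℝ≥0∞) ^ 2 * (‖ψ (x, y)‖₊ : ℝ≥0∞) ^ 2 := by
      rw [hvol, lintegral_prod_symm _ hmf₁.aemeasurable]
    rw [htonelli]
    -- a.e. slice integrability
    have hae1 : ∀ᵐ y : 𝓔, Integrable (fun x => ‖ψ (x, y)‖ ^ 2) volume :=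
      hψsq'.prod_left_ae
    have hae2 : ∀ᵐ y : 𝓔, Integrable (fun x => ‖D (x, y)‖ ^ 2) volume :=
      hDsq'.prod_left_ae
    have hslice : ∀ᵐ y : 𝓔,
        (∫⁻ x, (‖V (x - y)‖₊ : ℝ≥0∞) ^ 2 * (‖ψ (x, y)‖₊ : ℝ≥0∞) ^ 2)
          ≤ ENNReal.ofReal (C * (A y + B y)) := by
      filter_upwards [hae1, hae2] with y hy1 hy2
      set φ : 𝓔 → ℂ := fun x => ψ (x + y, y) with hφdef
      have hφdiff : Differentiable ℝ φ := by
        intro a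
        exact ((hψdiff (a + y, y)).hasFDerivAt.comp a
          (((hasFDerivAt_id a).add_const y).prodMk (hasFDerivAt_const y a))).differentiableAt
      have hφfd : (fun x => fderiv ℝ φ x) = fun x => D (x + y, y) := funext (hfd' y)
      have hφmem : MemLp φ 2 (volume : Measure 𝓔) := by
        refine (memLp_two_iff_integrable_sq_norm ?_).mpr ?_
        · exact (hψc.comp (by fun_prop : Continuous fun x : 𝓔 => (x + y, y))).aestronglyMeasurable
        · exact hy1.comp_add_right y
      have hφ'mem : MemLp (fun x => fderiv ℝ φ x) 2 (volume : Measure 𝓔) := by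
        rw [hφfd]
        refine (memLp_two_iff_integrable_sq_norm ?_).mpr ?_
        · exact ((hDmeas.comp
            ((measurable_id.add_const y).prodMk measurable_const)).aestronglyMeasurable)
        · exact hy2.comp_add_right y
      have hVφ := hV φ hφdiff hφmem hφ'mem
      have htrans : (∫⁻ x, (‖V (x - y)‖₊ : ℝ≥0∞) ^ 2 * (‖ψ (x, y)‖₊ : ℝ≥0∞) ^ 2)
          = ∫⁻ x, (‖V x‖₊ : ℝ≥0∞) ^ 2 * (‖φ x‖₊ : ℝ≥0∞) ^ 2 := by
        rw [← lintegral_add_right_eq_self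
          (fun x => (‖V (x - y)‖₊ : ℝ≥0∞) ^ 2 * (‖ψ (x, y)‖₊ : ℝ≥0∞) ^ 2) y]
        simp [hφdef]
      have hint1 : (∫ x, ‖φ x‖ ^ 2) = A y := by
        rw [hAdef]
        simpa using integral_add_right_eq_self (fun x => ‖ψ (x, y)‖ ^ 2) y
      have hint2 : (∫ x, ‖fderiv ℝ φ x‖ ^ 2) = B y := by
        rw [hBdef]
        simp only [hφfd]
        simpa using integral_add_right_eq_self (fun x => ‖D (x, y)‖ ^ 2) y
      rw [htrans]
      calc (∫⁻ x, (‖V x‖₊ : ℝ≥0∞) ^ 2 * (‖φ x‖₊ : ℝ≥0∞) ^ 2)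
          ≤ ENNReal.ofReal (C * ((∫ x, ‖φ x‖ ^ 2) + ∫ x, ‖fderiv ℝ φ x‖ ^ 2)) := hVφ
        _ = ENNReal.ofReal (C * (A y + B y)) := by rw [hint1, hint2]
    calc (∫⁻ y, ∫⁻ x, (‖V (x - y)‖₊ : ℝ≥0∞) ^ 2 * (‖ψ (x, y)‖₊ : ℝ≥0∞) ^ 2)
        ≤ ∫⁻ y, ENNReal.ofReal (C * (A y + B y)) := lintegral_mono_ae hslice
      _ = ENNReal.ofReal (∫ y, C * (A y + B y)) :=
          (ofReal_integral_eq_lintegral_ofReal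
            ((hAint.add hBint).const_mul C)
            (Filter.Eventually.of_forall fun y =>
              mul_nonneg hC.le (add_nonneg (hA0 y) (hB0 y)))).symm
      _ = ENNReal.ofReal (C * (S + T)) := by
          rw [integral_const_mul, integral_add hAint hBint, hSA, hTB]
  -- Step D : ∫⁻ g = ofReal S
  have hstepD : (∫⁻ p : 𝓔 × 𝓔, (‖ψ p‖₊ : ℝ≥0∞) ^ 2) = ENNReal.ofReal S := by
    have hi : (fun p : 𝓔 × 𝓔 => ((‖ψ p‖₊ : ℝ≥0∞)) ^ 2)
        = fun p => ENNReal.ofReal (‖ψ p‖ ^ 2) := by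
      funext p
      rw [← enorm_eq_nnnorm, ← ofReal_norm, ← ENNReal.ofReal_pow (norm_nonneg _)]
    rw [hSdef, hi,
      ← ofReal_integral_eq_lintegral_ofReal hψsq
        (Filter.Eventually.of_forall fun p => by positivity)]
  -- Step A : bound the absolute value by the lintegral
  have hstepA : |∫ p : 𝓔 × 𝓔, V (p.1 - p.2) * ‖ψ p‖ ^ 2|
      ≤ (∫⁻ p : 𝓔 × 𝓔, (‖V (p.1 - p.2)‖₊ : ℝ≥0∞) * (‖ψ p‖₊ : ℝ≥0∞) ^ 2).toReal := by
    have h := norm_integral_le_lintegral_norm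
      (fun p : 𝓔 × 𝓔 => V (p.1 - p.2) * ‖ψ p‖ ^ 2) (μ := volume)
    rw [Real.norm_eq_abs] at h
    refine h.trans (le_of_eq ?_)
    congr 1
    refine lintegral_congr fun p => ?_
    rw [Real.norm_eq_abs, abs_mul, abs_of_nonneg (by positivity : (0:ℝ) ≤ ‖ψ p‖ ^ 2),
      ENNReal.ofReal_mul (abs_nonneg _), ENNReal.ofReal_pow (norm_nonneg _)]
    congr 1
    · rw [← Real.norm_eq_abs, ofReal_norm, enorm_eq_nnnorm]
    · rw [ofReal_norm, enorm_eq_nnnorm]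
  -- assemble
  have hbound : (∫⁻ p : 𝓔 × 𝓔, (‖V (p.1 - p.2)‖₊ : ℝ≥0∞) * (‖ψ p‖₊ : ℝ≥0∞) ^ 2)
      ≤ ENNReal.ofReal (ε * T + (ε + C / (4 * ε)) * S) := by
    refine hstepB.trans ?_
    calc ENNReal.ofReal (ε / C)
          * (∫⁻ p : 𝓔 × 𝓔, (‖V (p.1 - p.2)‖₊ : ℝ≥0∞) ^ 2 * (‖ψ p‖₊ : ℝ≥0∞) ^ 2)
        + ENNReal.ofReal (C / (4 * ε)) * ∫⁻ p : 𝓔 × 𝓔, (‖ψ p‖₊ : ℝ≥0∞) ^ 2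
        ≤ ENNReal.ofReal (ε / C) * ENNReal.ofReal (C * (S + T))
          + ENNReal.ofReal (C / (4 * ε)) * ENNReal.ofReal S := by
          exact add_le_add (mul_le_mul_right hstepC _)
            (le_of_eq (by rw [hstepD]))
      _ = ENNReal.ofReal ((ε / C) * (C * (S + T)) + (C / (4 * ε)) * S) := by
          rw [← ENNReal.ofReal_mul (by positivity), ← ENNReal.ofReal_mul (by positivity),
            ← ENNReal.ofReal_add (by positivity) (by positivity)]
      _ = ENNReal.ofReal (ε * T + (ε + C / (4 * ε)) * S) := by
          congr 1
          field_simp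
          ring
  have hnn : 0 ≤ ε * T + (ε + C / (4 * ε)) * S := by
    have h4 : 0 ≤ C / (4 * ε) := by positivity
    exact add_nonneg (mul_nonneg hε.le hT0)
      (mul_nonneg (add_nonneg hε.le h4) hS0)
  have hfinal : |∫ p : 𝓔 × 𝓔, V (p.1 - p.2) * ‖ψ p‖ ^ 2|
      ≤ ε * T + (ε + C / (4 * ε)) * S := by
    refine hstepA.trans ?_
    calc (∫⁻ p : 𝓔 × 𝓔, (‖V (p.1 - p.2)‖₊ : ℝ≥0∞) * (‖ψ p‖₊ : ℝ≥0∞) ^ 2).toReal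
        ≤ (ENNReal.ofReal (ε * T + (ε + C / (4 * ε)) * S)).toReal :=
          ENNReal.toReal_mono ENNReal.ofReal_ne_top hbound
      _ = ε * T + (ε + C / (4 * ε)) * S := ENNReal.toReal_ofReal hnn
  -- rewrite the goal's gradient term as T
  have hfun : (fun p : 𝓔 × 𝓔 => ‖fderiv ℝ (fun x => ψ (x, p.2)) p.1‖ ^ 2)
      = fun p : 𝓔 × 𝓔 => ‖D p‖ ^ 2 := by
    funext p
    rw [hfd p.1 p.2]
  have hgoalT : (∫ p : 𝓔 × 𝓔, ‖fderiv ℝ (fun x => ψ (x, p.2)) p.1‖ ^ 2) = T := by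
    rw [hfun]
  rw [hgoalT]
  exact hfinal
end
end

section
/- Let N ≥ 2 be an integer, ℓ > 0, C > 0, M ≥ 0. Let u ∈ L²(ℝ³) with |u(x)| ≤ M almost everywhere, let Φ ∈ L²((ℝ³)^{N−1}), and for each j = 1, …, N−1 let f_j : ℝ³ → [0,1] be measurable with 1 − f_j(z)² ≤ (C/N)·1_{\{|z| ≤ ℓ\}}/|z| for almost every z ≠ 0. Define Ψ(x, y₁, …, y_{N−1}) := u(x) · (∏_{j=1}^{N−1} f_j(x − y_j)) · Φ(y₁, …, y_{N−1}). Then Ψ ∈ L²((ℝ³)^N) and ‖u‖₂² ‖Φ‖₂² ≥ ‖Ψ‖₂² ≥ (‖u‖₂² − 2π C ℓ² M² (N−1)/N) ‖Φ‖₂². -/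
open MeasureTheory
open scoped Real

noncomputable section

section Aux

open Set Measure

/-- Volume of the unit ball in `ℝ³`. -/
lemma volume_unitBall_three :
    (volume (Metric.ball (0:EuclideanSpace ℝ (Fin 3)) 1)).toReal = 4*π/3 := by
  rw [EuclideanSpace.volume_ball]
  have h52 : Real.Gamma (3/2+1) = 3/4 * Real.sqrt π := by
    rw [Real.Gamma_add_one (by norm_num)]
    have : (3:ℝ)/2 = 1/2 + 1 := by norm_num
    rw [this, Real.Gamma_add_one (by norm_num), Real.Gamma_one_half_eq]
    ring
  simp only [Fintype.card_fin]
  rw [← ENNReal.ofReal_pow (by positivity), ← ENNReal.ofReal_mul (by positivity)]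
  rw [ENNReal.toReal_ofReal (by positivity)]
  rw [show ((3:ℕ):ℝ)/2 + 1 = 3/2 + 1 by norm_num]
  rw [h52]
  have hs : Real.sqrt π ^ 3 = π * Real.sqrt π := by
    have := Real.sq_sqrt (le_of_lt Real.pi_pos)
    nlinarith [Real.sqrt_nonneg π]
  have hπ : Real.sqrt π > 0 := Real.sqrt_pos.mpr Real.pi_pos
  field_simp [hs]
  ring
  exact Real.sq_sqrt Real.pi_pos.le

/-- `∫_{|z|≤ℓ} |z|⁻¹ dz = 2πℓ²` in `ℝ³`. -/
lemma integral_indicator_div_norm (ℓ : ℝ) (hℓ : 0 < ℓ) :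
    ∫ z : EuclideanSpace ℝ (Fin 3), (if ‖z‖ ≤ ℓ then (1:ℝ) else 0)/‖z‖ = 2*π*ℓ^2 := by
  have := integral_fun_norm_addHaar (volume : Measure (EuclideanSpace ℝ (Fin 3)))
    (fun r => (if r ≤ ℓ then (1:ℝ) else 0)/r)
  rw [this, measureReal_def, volume_unitBall_three, finrank_euclideanSpace_fin]
  have h1 : ∫ y in Ioi (0:ℝ), y ^ (3-1) • ((if y ≤ ℓ then (1:ℝ) else 0)/y)
      = ∫ y in Ioi (0:ℝ), (Ioc (0:ℝ) ℓ).indicator id y := by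
    refine setIntegral_congr_fun measurableSet_Ioi fun y hy => ?_
    simp only [mem_Ioi] at hy
    by_cases h : y ≤ ℓ
    · simp only [indicator, mem_Ioc, hy, h, and_self, if_true, smul_eq_mul, id]
      field_simp
    · simp only [indicator, mem_Ioc, h, and_false, if_false, smul_eq_mul]
      simp [h]
  rw [h1, setIntegral_indicator measurableSet_Ioc]
  have h2 : Ioi (0:ℝ) ∩ Ioc 0 ℓ = Ioc 0 ℓ := by
    ext x; simp only [mem_inter_iff, mem_Ioc, mem_Ioi]; tauto
  rw [h2]
  have h3 : ∫ y in Ioc (0:ℝ) ℓ, id y = ℓ^2/2 := by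
    rw [← intervalIntegral.integral_of_le hℓ.le]
    have : ∫ y in (0:ℝ)..ℓ, id y = ∫ y in (0:ℝ)..ℓ, y := rfl
    rw [this, integral_id]
    ring
  rw [h3]
  simp only [smul_eq_mul, nsmul_eq_mul]
  push_cast
  ring

/-- The function `𝟙_{|z|≤ℓ}/|z|` is integrable on `ℝ³`. -/
lemma integrable_indicator_div_norm (ℓ : ℝ) (hℓ : 0 < ℓ) :
    Integrable (fun z : EuclideanSpace ℝ (Fin 3) => (if ‖z‖ ≤ ℓ then (1:ℝ) else 0)/‖z‖) := by
  set f : ℝ → ℝ := fun r => (if r ≤ ℓ then (1:ℝ) else 0)/r with hf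
  have hIoc : Integrable ((Ioc (0:ℝ) ℓ).indicator id) volume := by
    have : IntegrableOn id (Ioc (0:ℝ) ℓ) volume := by
      have := intervalIntegral.intervalIntegrable_id (μ := volume) (a := (0:ℝ)) (b := ℓ)
      rwa [intervalIntegrable_iff_integrableOn_Ioc_of_le hℓ.le] at this
    exact this.integrable_indicator measurableSet_Ioc
  have hbase : IntegrableOn (fun y : ℝ => y ^ 2 * f y) (Ioi (0:ℝ)) volume := by
    apply (hIoc.integrableOn).congr_fun_ae ?_
    filter_upwards [ae_restrict_mem measurableSet_Ioi] with y hy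
    simp only [mem_Ioi] at hy
    by_cases h : y ≤ ℓ
    · simp only [indicator, mem_Ioc, hy, h, and_self, if_true, id, hf]
      field_simp
    · simp only [indicator, mem_Ioc, h, and_false, if_false, hf]
      simp [h]
  have key : Integrable ((f ∘ Subtype.val ∘ Prod.snd) ∘
      (homeomorphUnitSphereProd (EuclideanSpace ℝ (Fin 3))))
      ((volume : Measure (EuclideanSpace ℝ (Fin 3))).comap Subtype.val) := by
    rw [MeasurePreserving.integrable_comp_emb
      (Measure.measurePreserving_homeomorphUnitSphereProd _)
      (Homeomorph.measurableEmbedding _)]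
    have h1 : Integrable (f ∘ Subtype.val) (Measure.volumeIoiPow
        (Module.finrank ℝ (EuclideanSpace ℝ (Fin 3)) - 1)) := by
      rw [Measure.volumeIoiPow, integrable_withDensity_iff]
      · have hs : Ioi (0:ℝ) ⊆ range (Subtype.val : (Ioi (0:ℝ)) → ℝ) := by
          rw [Subtype.range_coe]
        have h2 := (MeasurableEmbedding.subtype_coe measurableSet_Ioi).integrableOn_iff_comap
          (f := fun y : ℝ => y ^ (Module.finrank ℝ (EuclideanSpace ℝ (Fin 3)) - 1) * f y)
          (μ := volume) (s := Ioi (0:ℝ)) hs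
        rw [finrank_euclideanSpace_fin] at h2 ⊢
        have h3 : IntegrableOn (fun y : ℝ => y ^ (3-1) * f y) (Ioi (0:ℝ)) volume := hbase
        rw [h2] at h3
        have h4 : IntegrableOn ((fun y : ℝ => y ^ (3-1) * f y) ∘ Subtype.val)
            ((Subtype.val : (Ioi (0:ℝ)) → ℝ) ⁻¹' Ioi 0) (volume.comap Subtype.val) := h3
        have hpre : ((Subtype.val : (Ioi (0:ℝ)) → ℝ) ⁻¹' Ioi 0) = univ := by
          ext x; simpa using x.2
        rw [hpre, IntegrableOn, Measure.restrict_univ] at h4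
        apply h4.congr (ae_of_all _ fun r => ?_)
        simp only [Function.comp]
        rw [ENNReal.toReal_ofReal (le_of_lt (pow_pos r.2.out _))]
        ring
      · exact (Measurable.pow_const (measurable_subtype_coe) _).ennreal_ofReal
      · exact ae_of_all _ fun r => ENNReal.ofReal_lt_top
    have hc : Integrable (fun q : (Metric.sphere (0:EuclideanSpace ℝ (Fin 3)) 1) × (Ioi (0:ℝ)) =>
        (1:ℝ) * (f ∘ Subtype.val) q.2)
        ((volume : Measure (EuclideanSpace ℝ (Fin 3))).toSphere.prod
          (Measure.volumeIoiPow (Module.finrank ℝ (EuclideanSpace ℝ (Fin 3)) - 1))) :=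
      (integrable_const (1:ℝ)).mul_prod h1
    simpa [Function.comp_def] using hc
  have h2 : IntegrableOn (fun z : EuclideanSpace ℝ (Fin 3) => f ‖z‖) ({0}ᶜ) volume := by
    have hs : ({0}ᶜ : Set (EuclideanSpace ℝ (Fin 3)))
        ⊆ range (Subtype.val : ({0}ᶜ : Set (EuclideanSpace ℝ (Fin 3))) → _) := by
      rw [Subtype.range_coe]
    rw [(MeasurableEmbedding.subtype_coe (measurableSet_singleton
      (0:EuclideanSpace ℝ (Fin 3))).compl).integrableOn_iff_comap hs]
    have hpre : ((Subtype.val : ({0}ᶜ : Set (EuclideanSpace ℝ (Fin 3))) → _) ⁻¹' ({0}ᶜ)) = univ := by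
      ext x; simpa using x.2
    rw [hpre, IntegrableOn, Measure.restrict_univ]
    refine key.congr (ae_of_all _ fun x => ?_)
    simp [Function.comp_def, homeomorphUnitSphereProd_apply_snd_coe]
  rwa [IntegrableOn, MeasureTheory.restrict_compl_singleton] at h2

/-- `∏ aᵢ ≥ 1 − ∑ (1 − aᵢ)` for `aᵢ ∈ [0,1]`. -/
lemma one_sub_sum_le_prod {ι : Type*} (s : Finset ι) (a : ι → ℝ)
    (h0 : ∀ i, 0 ≤ a i) (h1 : ∀ i, a i ≤ 1) :
    1 - ∑ i ∈ s, (1 - a i) ≤ ∏ i ∈ s, a i := by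
  classical
  induction s using Finset.induction with
  | empty => simp
  | @insert x s hx ih =>
    rw [Finset.prod_insert hx, Finset.sum_insert hx]
    have hP : (0:ℝ) ≤ ∏ i ∈ s, a i := Finset.prod_nonneg fun i _ => h0 i
    have hS : (0:ℝ) ≤ ∑ i ∈ s, (1 - a i) :=
      Finset.sum_nonneg fun i _ => by linarith [h1 i]
    nlinarith [mul_le_mul_of_nonneg_left ih (h0 x), h0 x, h1 x]

/-- The shear `(x, y) ↦ (x − yⱼ, y)` as a measurable equivalence. -/
def shear {n : ℕ} (j : Fin n) :
    (EuclideanSpace ℝ (Fin 3) × (Fin n → EuclideanSpace ℝ (Fin 3))) ≃ᵐ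
    (EuclideanSpace ℝ (Fin 3) × (Fin n → EuclideanSpace ℝ (Fin 3))) where
  toFun p := (p.1 - p.2 j, p.2)
  invFun p := (p.1 + p.2 j, p.2)
  left_inv p := by simp
  right_inv p := by simp
  measurable_toFun := by
    show Measurable fun p : EuclideanSpace ℝ (Fin 3) × (Fin n → EuclideanSpace ℝ (Fin 3)) =>
      (p.1 - p.2 j, p.2)
    exact (measurable_fst.sub
      ((measurable_pi_apply j : Measurable fun g : Fin n → EuclideanSpace ℝ (Fin 3) => g j).comp
        measurable_snd)).prodMk measurable_snd
  measurable_invFun := by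
    show Measurable fun p : EuclideanSpace ℝ (Fin 3) × (Fin n → EuclideanSpace ℝ (Fin 3)) =>
      (p.1 + p.2 j, p.2)
    exact (measurable_fst.add
      ((measurable_pi_apply j : Measurable fun g : Fin n → EuclideanSpace ℝ (Fin 3) => g j).comp
        measurable_snd)).prodMk measurable_snd

lemma shear_measurePreserving {n : ℕ} (j : Fin n) :
    MeasurePreserving (shear j)
      ((volume : Measure (EuclideanSpace ℝ (Fin 3))).prod volume)
      ((volume : Measure (EuclideanSpace ℝ (Fin 3))).prod volume) := by
  have hW : MeasurePreserving
      (fun q : (Fin n → EuclideanSpace ℝ (Fin 3)) × EuclideanSpace ℝ (Fin 3) =>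
        (id q.1, q.2 - q.1 j))
      ((volume : Measure (Fin n → EuclideanSpace ℝ (Fin 3))).prod volume)
      ((volume : Measure (Fin n → EuclideanSpace ℝ (Fin 3))).prod volume) := by
    refine MeasurePreserving.skew_product
      (f := (id : (Fin n → EuclideanSpace ℝ (Fin 3)) → (Fin n → EuclideanSpace ℝ (Fin 3))))
      (g := fun (y : Fin n → EuclideanSpace ℝ (Fin 3)) (x : EuclideanSpace ℝ (Fin 3)) => x - y j)
      (MeasurePreserving.id _) ?_ ?_
    · exact measurable_snd.sub
        ((measurable_pi_apply j : Measurable fun g : Fin n → EuclideanSpace ℝ (Fin 3) => g j).comp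
          measurable_fst)
    · exact ae_of_all _ fun y => (measurePreserving_sub_right volume (y j)).map_eq
  have hswap1 : MeasurePreserving
      (Prod.swap : EuclideanSpace ℝ (Fin 3) × (Fin n → EuclideanSpace ℝ (Fin 3)) →
        (Fin n → EuclideanSpace ℝ (Fin 3)) × EuclideanSpace ℝ (Fin 3))
      ((volume : Measure (EuclideanSpace ℝ (Fin 3))).prod volume)
      ((volume : Measure (Fin n → EuclideanSpace ℝ (Fin 3))).prod volume) :=
    measurePreserving_swap
  have hswap2 : MeasurePreserving
      (Prod.swap : (Fin n → EuclideanSpace ℝ (Fin 3)) × EuclideanSpace ℝ (Fin 3) →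
        EuclideanSpace ℝ (Fin 3) × (Fin n → EuclideanSpace ℝ (Fin 3)))
      ((volume : Measure (Fin n → EuclideanSpace ℝ (Fin 3))).prod volume)
      ((volume : Measure (EuclideanSpace ℝ (Fin 3))).prod volume) :=
    measurePreserving_swap
  exact (hswap2.comp hW).comp hswap1

end Aux

/-- The correlated trial state `Ψ(x, y₁, …, y_{N−1}) = u(x) ∏ⱼ fⱼ(x − yⱼ) Φ(y₁, …, y_{N−1})`. -/
def correlatedTrial (N : ℕ) (u : EuclideanSpace ℝ (Fin 3) → ℂ)
    (f : Fin (N - 1) → EuclideanSpace ℝ (Fin 3) → ℝ)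
    (Φ : (Fin (N - 1) → EuclideanSpace ℝ (Fin 3)) → ℂ) :
    EuclideanSpace ℝ (Fin 3) × (Fin (N - 1) → EuclideanSpace ℝ (Fin 3)) → ℂ :=
  fun p => u p.1 * (∏ j, ((f j (p.1 - p.2 j) : ℝ) : ℂ)) * Φ p.2

set_option maxHeartbeats 1000000 in
/-- Norm comparison for the correlated trial state: if `|u| ≤ M` a.e.,
`0 ≤ fⱼ ≤ 1` and `1 − fⱼ(z)² ≤ (C/N) 𝟙_{|z|≤ℓ}/|z|` a.e., then `Ψ ∈ L²` and
`‖u‖₂² ‖Φ‖₂² ≥ ‖Ψ‖₂² ≥ (‖u‖₂² − 2πCℓ²M²(N−1)/N) ‖Φ‖₂²`. -/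
theorem correlatedTrial_norm_bounds
    (N : ℕ) (hN : 2 ≤ N) (ℓ C M : ℝ) (hℓ : 0 < ℓ) (hC : 0 < C) (hM : 0 ≤ M)
    (u : EuclideanSpace ℝ (Fin 3) → ℂ) (hu : MemLp u 2 volume)
    (huM : ∀ᵐ x, ‖u x‖ ≤ M)
    (Φ : (Fin (N - 1) → EuclideanSpace ℝ (Fin 3)) → ℂ) (hΦ : MemLp Φ 2 volume)
    (f : Fin (N - 1) → EuclideanSpace ℝ (Fin 3) → ℝ)
    (hfm : ∀ j, Measurable (f j))
    (hf01 : ∀ j z, 0 ≤ f j z ∧ f j z ≤ 1)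
    (hfbd : ∀ j, ∀ᵐ z : EuclideanSpace ℝ (Fin 3), z ≠ 0 →
      1 - (f j z) ^ 2 ≤ C / N * (if ‖z‖ ≤ ℓ then (1 : ℝ) else 0) / ‖z‖) :
    MemLp (correlatedTrial N u f Φ) 2 volume
    ∧ (∫ p, ‖correlatedTrial N u f Φ p‖ ^ 2)
        ≤ (∫ x, ‖u x‖ ^ 2) * ∫ y, ‖Φ y‖ ^ 2
    ∧ ((∫ x, ‖u x‖ ^ 2) - 2 * π * C * ℓ ^ 2 * M ^ 2 * ((N : ℝ) - 1) / N)
          * (∫ y, ‖Φ y‖ ^ 2)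
        ≤ ∫ p, ‖correlatedTrial N u f Φ p‖ ^ 2 := by
  classical
  have hNR : (0:ℝ) < N := by
    have : 0 < N := by omega
    exact_mod_cast this
  have hvol : (volume : Measure (EuclideanSpace ℝ (Fin 3) ×
        (Fin (N - 1) → EuclideanSpace ℝ (Fin 3))))
      = (volume : Measure (EuclideanSpace ℝ (Fin 3))).prod volume := Measure.volume_eq_prod _ _
  have hfnn : ∀ j z, 0 ≤ f j z := fun j z => (hf01 j z).1
  have hprod_nn : ∀ p : EuclideanSpace ℝ (Fin 3) × (Fin (N - 1) → EuclideanSpace ℝ (Fin 3)),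
      0 ≤ ∏ j, f j (p.1 - p.2 j) := fun p => Finset.prod_nonneg fun j _ => hfnn _ _
  -- pointwise formula for the squared norm
  have hΨnorm : ∀ p, ‖correlatedTrial N u f Φ p‖^2
      = ‖u p.1‖^2 * (∏ j, f j (p.1 - p.2 j))^2 * ‖Φ p.2‖^2 := by
    intro p
    have hc : (∏ j, ((f j (p.1 - p.2 j) : ℝ) : ℂ)) = ((∏ j, f j (p.1 - p.2 j) : ℝ) : ℂ) := by
      push_cast
      rfl
    rw [correlatedTrial, hc, norm_mul, norm_mul, Complex.norm_real,
      Real.norm_of_nonneg (hprod_nn p)]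
    ring
  -- measurability
  have hqmp_fst : Measure.QuasiMeasurePreserving
      (Prod.fst : EuclideanSpace ℝ (Fin 3) × (Fin (N - 1) → EuclideanSpace ℝ (Fin 3)) →
        EuclideanSpace ℝ (Fin 3)) volume volume := by
    rw [hvol]; exact Measure.quasiMeasurePreserving_fst
  have hqmp_snd : Measure.QuasiMeasurePreserving
      (Prod.snd : EuclideanSpace ℝ (Fin 3) × (Fin (N - 1) → EuclideanSpace ℝ (Fin 3)) →
        (Fin (N - 1) → EuclideanSpace ℝ (Fin 3))) volume volume := by
    rw [hvol]; exact Measure.quasiMeasurePreserving_snd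
  have hFmeas : Measurable fun p : EuclideanSpace ℝ (Fin 3) ×
      (Fin (N - 1) → EuclideanSpace ℝ (Fin 3)) => ∏ j, f j (p.1 - p.2 j) := by
    apply Finset.measurable_prod
    intro j _
    exact (hfm j).comp (measurable_fst.sub
      ((measurable_pi_apply j :
        Measurable fun g : Fin (N-1) → EuclideanSpace ℝ (Fin 3) => g j).comp measurable_snd))
  have hΨm : AEStronglyMeasurable (correlatedTrial N u f Φ) volume := by
    have h1 : AEStronglyMeasurable (fun p : EuclideanSpace ℝ (Fin 3) ×
        (Fin (N - 1) → EuclideanSpace ℝ (Fin 3)) => u p.1) volume :=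
      hu.1.comp_quasiMeasurePreserving hqmp_fst
    have h3 : AEStronglyMeasurable (fun p : EuclideanSpace ℝ (Fin 3) ×
        (Fin (N - 1) → EuclideanSpace ℝ (Fin 3)) => Φ p.2) volume :=
      hΦ.1.comp_quasiMeasurePreserving hqmp_snd
    have h2 : Measurable fun p : EuclideanSpace ℝ (Fin 3) ×
        (Fin (N - 1) → EuclideanSpace ℝ (Fin 3)) =>
        (((∏ j, f j (p.1 - p.2 j) : ℝ)) : ℂ) := Complex.measurable_ofReal.comp hFmeas
    have heq : correlatedTrial N u f Φ
        = fun p => u p.1 * ((∏ j, f j (p.1 - p.2 j) : ℝ) : ℂ) * Φ p.2 := by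
      funext p
      rw [correlatedTrial]
      push_cast
      rfl
    rw [heq]
    exact (h1.mul h2.aestronglyMeasurable).mul h3
  -- integrability
  have hu2 : Integrable (fun x => ‖u x‖^2) volume := (memLp_two_iff_integrable_sq_norm hu.1).mp hu
  have hΦ2 : Integrable (fun y => ‖Φ y‖^2) volume := (memLp_two_iff_integrable_sq_norm hΦ.1).mp hΦ
  have hA : Integrable (fun p : EuclideanSpace ℝ (Fin 3) ×
      (Fin (N - 1) → EuclideanSpace ℝ (Fin 3)) => ‖u p.1‖^2 * ‖Φ p.2‖^2) volume := by
    rw [hvol]; exact hu2.mul_prod hΦ2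
  have hle : ∀ p, ‖correlatedTrial N u f Φ p‖^2 ≤ ‖u p.1‖^2 * ‖Φ p.2‖^2 := by
    intro p
    rw [hΨnorm p]
    have h1 : (∏ j, f j (p.1 - p.2 j))^2 ≤ 1 := by
      have h2 := Finset.prod_le_one (s := Finset.univ)
        (f := fun j : Fin (N-1) => f j (p.1 - p.2 j))
        (fun j _ => hfnn j _) (fun j _ => (hf01 j _).2)
      nlinarith [hprod_nn p]
    nlinarith [mul_nonneg (mul_nonneg (sq_nonneg ‖u p.1‖) (sub_nonneg.mpr h1))
      (sq_nonneg ‖Φ p.2‖)]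
  have hΨ2 : Integrable (fun p => ‖correlatedTrial N u f Φ p‖^2) volume := by
    apply hA.mono' (hΨm.norm.aemeasurable.pow_const 2).aestronglyMeasurable
    exact ae_of_all _ fun p => by
      rw [Real.norm_of_nonneg (by positivity)]
      exact hle p
  have hmem : MemLp (correlatedTrial N u f Φ) 2 volume :=
    (memLp_two_iff_integrable_sq_norm hΨm).mpr hΨ2
  have hAint_val : (∫ p, ‖u p.1‖^2*‖Φ p.2‖^2 ∂(volume : Measure (EuclideanSpace ℝ (Fin 3) ×
      (Fin (N - 1) → EuclideanSpace ℝ (Fin 3))))) = (∫ x, ‖u x‖^2) * ∫ y, ‖Φ y‖^2 := by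
    rw [hvol]
    exact integral_prod_mul (f := fun x => ‖u x‖^2) (g := fun y => ‖Φ y‖^2)
  have hupper : (∫ p, ‖correlatedTrial N u f Φ p‖^2) ≤ (∫ x, ‖u x‖^2) * ∫ y, ‖Φ y‖^2 := by
    have h := integral_mono hΨ2 hA hle
    rwa [hAint_val] at h
  refine ⟨hmem, hupper, ?_⟩
  -- lower bound
  have hz0 : ∀ᵐ z : EuclideanSpace ℝ (Fin 3), z ≠ 0 := by
    rw [ae_iff]
    have h0 : {z : EuclideanSpace ℝ (Fin 3) | ¬ z ≠ 0} = {0} := by ext z; simp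
    rw [h0]
    exact measure_singleton _
  have hqmp_j : ∀ j : Fin (N-1), Measure.QuasiMeasurePreserving
      (fun p : EuclideanSpace ℝ (Fin 3) × (Fin (N - 1) → EuclideanSpace ℝ (Fin 3)) =>
        p.1 - p.2 j) volume volume := by
    intro j
    have h1 := (shear_measurePreserving j).quasiMeasurePreserving
    have h2 : Measure.QuasiMeasurePreserving
        (Prod.fst : EuclideanSpace ℝ (Fin 3) × (Fin (N - 1) → EuclideanSpace ℝ (Fin 3)) →
          EuclideanSpace ℝ (Fin 3))
        ((volume : Measure (EuclideanSpace ℝ (Fin 3))).prod volume) volume :=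
      Measure.quasiMeasurePreserving_fst
    have h3 := h2.comp h1
    rw [← hvol] at h3
    exact h3
  have haebd : ∀ᵐ p : EuclideanSpace ℝ (Fin 3) × (Fin (N - 1) → EuclideanSpace ℝ (Fin 3))
      ∂volume, ∀ j, ‖u p.1‖^2 * (1 - (f j (p.1 - p.2 j))^2) * ‖Φ p.2‖^2
      ≤ M^2 * (C/↑N * (if ‖p.1 - p.2 j‖ ≤ ℓ then (1:ℝ) else 0) / ‖p.1 - p.2 j‖) * ‖Φ p.2‖^2 := by
    rw [ae_all_iff]
    intro j
    filter_upwards [hqmp_fst.ae huM, (hqmp_j j).ae (hfbd j), (hqmp_j j).ae hz0] with p h1 h2 h3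
    have h4 := h2 h3
    have hf2 : 0 ≤ 1 - (f j (p.1 - p.2 j))^2 := by
      nlinarith [(hf01 j (p.1 - p.2 j)).1, (hf01 j (p.1 - p.2 j)).2]
    have h5 : ‖u p.1‖^2 ≤ M^2 := by nlinarith [norm_nonneg (u p.1)]
    have h6 : ‖u p.1‖^2 * (1 - (f j (p.1 - p.2 j))^2)
        ≤ M^2 * (C/↑N * (if ‖p.1 - p.2 j‖ ≤ ℓ then (1:ℝ) else 0) / ‖p.1 - p.2 j‖) :=
      mul_le_mul h5 h4 hf2 (by positivity)
    exact mul_le_mul_of_nonneg_right h6 (sq_nonneg _)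
  set G : EuclideanSpace ℝ (Fin 3) × (Fin (N - 1) → EuclideanSpace ℝ (Fin 3)) → ℝ :=
    fun q => M^2 * (C/↑N * (if ‖q.1‖ ≤ ℓ then (1:ℝ) else 0) / ‖q.1‖) * ‖Φ q.2‖^2 with hGdef
  have hg1 : Integrable (fun z : EuclideanSpace ℝ (Fin 3) =>
      M^2 * (C/↑N * (if ‖z‖ ≤ ℓ then (1:ℝ) else 0) / ‖z‖)) volume :=
    ((integrable_indicator_div_norm ℓ hℓ).const_mul (M^2 * (C/↑N))).congr
      (ae_of_all _ fun z => by ring)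
  have hGint : Integrable G ((volume : Measure (EuclideanSpace ℝ (Fin 3))).prod volume) :=
    hg1.mul_prod hΦ2
  have hGj : ∀ j : Fin (N-1), Integrable (fun p => G (shear j p)) volume := by
    intro j
    rw [hvol]
    exact ((shear_measurePreserving j).integrable_comp_emb
      (shear j).measurableEmbedding).mpr hGint
  have hg1val : (∫ z : EuclideanSpace ℝ (Fin 3),
      M^2 * (C/↑N * (if ‖z‖ ≤ ℓ then (1:ℝ) else 0) / ‖z‖)) = M^2*(C/↑N) * (2*π*ℓ^2) := by
    have he : (fun z : EuclideanSpace ℝ (Fin 3) =>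
        M^2 * (C/↑N * (if ‖z‖ ≤ ℓ then (1:ℝ) else 0) / ‖z‖))
        = fun z => (M^2*(C/↑N)) * ((if ‖z‖ ≤ ℓ then (1:ℝ) else 0) / ‖z‖) :=
      funext fun z => by ring
    rw [he, integral_const_mul, integral_indicator_div_norm ℓ hℓ]
  have hGval : (∫ q, G q ∂((volume : Measure (EuclideanSpace ℝ (Fin 3))).prod volume))
      = M^2*(C/↑N)*(2*π*ℓ^2) * ∫ y, ‖Φ y‖^2 := by
    rw [hGdef, integral_prod_mul (f := fun z : EuclideanSpace ℝ (Fin 3) =>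
      M^2 * (C/↑N * (if ‖z‖ ≤ ℓ then (1:ℝ) else 0) / ‖z‖)) (g := fun y => ‖Φ y‖^2), hg1val]
  -- key pointwise lower bound
  have hkey : ∀ p : EuclideanSpace ℝ (Fin 3) × (Fin (N - 1) → EuclideanSpace ℝ (Fin 3)),
      (‖u p.1‖^2*‖Φ p.2‖^2) - (∑ j, ‖u p.1‖^2 * (1 - (f j (p.1 - p.2 j))^2) * ‖Φ p.2‖^2)
      ≤ ‖correlatedTrial N u f Φ p‖^2 := by
    intro p
    rw [hΨnorm p]
    have hprodsq : (∏ j, f j (p.1 - p.2 j))^2 = ∏ j, (f j (p.1 - p.2 j))^2 := by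
      rw [← Finset.prod_pow]
    have hineq := one_sub_sum_le_prod Finset.univ (fun j => (f j (p.1 - p.2 j))^2)
      (fun j => sq_nonneg _)
      (fun j => by
        show f j (p.1 - p.2 j)^2 ≤ (1:ℝ)
        nlinarith [(hf01 j (p.1 - p.2 j)).1, (hf01 j (p.1 - p.2 j)).2])
    beta_reduce at hineq
    have hnn : (0:ℝ) ≤ ‖u p.1‖^2 * ‖Φ p.2‖^2 := by positivity
    have hmul := mul_le_mul_of_nonneg_left hineq hnn
    have hsum : (∑ j, ‖u p.1‖^2 * (1 - (f j (p.1 - p.2 j))^2) * ‖Φ p.2‖^2)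
        = (‖u p.1‖^2*‖Φ p.2‖^2) * ∑ j, (1 - (f j (p.1 - p.2 j))^2) := by
      rw [Finset.mul_sum]
      exact Finset.sum_congr rfl fun j _ => by ring
    rw [hsum, hprodsq]
    have e2 : ‖u p.1‖^2 * (∏ j, (f j (p.1 - p.2 j))^2) * ‖Φ p.2‖^2
        = (‖u p.1‖^2*‖Φ p.2‖^2) * ∏ j, (f j (p.1 - p.2 j))^2 := by ring
    rw [e2]
    nlinarith [hmul]
  have hDint : Integrable (fun p : EuclideanSpace ℝ (Fin 3) ×
      (Fin (N - 1) → EuclideanSpace ℝ (Fin 3)) =>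
      ‖u p.1‖^2*‖Φ p.2‖^2 - ‖correlatedTrial N u f Φ p‖^2) volume := hA.sub hΨ2
  have hSint : Integrable (fun p : EuclideanSpace ℝ (Fin 3) ×
      (Fin (N - 1) → EuclideanSpace ℝ (Fin 3)) => ∑ j, G (shear j p)) volume :=
    integrable_finset_sum _ fun j _ => hGj j
  have hDle : ∀ᵐ p : EuclideanSpace ℝ (Fin 3) × (Fin (N - 1) → EuclideanSpace ℝ (Fin 3))
      ∂volume, ‖u p.1‖^2*‖Φ p.2‖^2 - ‖correlatedTrial N u f Φ p‖^2 ≤ ∑ j, G (shear j p) := by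
    filter_upwards [haebd] with p hp
    have h1 := hkey p
    have h2 : (∑ j, ‖u p.1‖^2 * (1 - (f j (p.1 - p.2 j))^2) * ‖Φ p.2‖^2)
        ≤ ∑ j, G (shear j p) := Finset.sum_le_sum fun j _ => hp j
    linarith
  have h7 := integral_mono_ae hDint hSint hDle
  rw [integral_sub hA hΨ2, hAint_val] at h7
  have h8 : (∫ p, ∑ j, G (shear j p) ∂(volume : Measure (EuclideanSpace ℝ (Fin 3) ×
      (Fin (N - 1) → EuclideanSpace ℝ (Fin 3)))))
      = ((N:ℝ)-1) * (M^2*(C/↑N)*(2*π*ℓ^2) * ∫ y, ‖Φ y‖^2) := by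
    rw [integral_finset_sum _ (fun j _ => hGj j)]
    have hj : ∀ j : Fin (N-1), (∫ p, G (shear j p) ∂(volume : Measure (EuclideanSpace ℝ (Fin 3) ×
        (Fin (N - 1) → EuclideanSpace ℝ (Fin 3)))))
        = M^2*(C/↑N)*(2*π*ℓ^2) * ∫ y, ‖Φ y‖^2 := by
      intro j
      rw [hvol]
      rw [(shear_measurePreserving j).integral_comp (shear j).measurableEmbedding G]
      exact hGval
    rw [Finset.sum_congr rfl fun j _ => hj j, Finset.sum_const, Finset.card_univ,
      Fintype.card_fin, nsmul_eq_mul]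
    congr 1
    rw [Nat.cast_sub (by omega)]
    norm_num
  rw [h8] at h7
  have hNne : (N:ℝ) ≠ 0 := ne_of_gt hNR
  have hexp : ((∫ x, ‖u x‖^2) - 2*π*C*ℓ^2*M^2*((N:ℝ)-1)/N) * (∫ y, ‖Φ y‖^2)
      = (∫ x, ‖u x‖^2)*(∫ y, ‖Φ y‖^2)
        - ((N:ℝ)-1)*(M^2*(C/↑N)*(2*π*ℓ^2) * ∫ y, ‖Φ y‖^2) := by
    field_simp
  rw [hexp]
  linarith

end
end
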